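/- Let q, x ∈ ℂ with |q| < 1. Define the Rogers–Szegő polynomials R_n(x|q) = ∑_{j=0}^{n} [n,j]_q · x^j and the polynomials R̂_n(x|q) = (−1)^n · ∑_{s=0}^{n} [n,s]_q · x^s · q^{s(s−1)/2 + (n−s)(n−s−1)/2}. Then ∑_{j=0}^{n} [n,j]_q · R_j(x|q) · R̂_{n−j}(x|q) = δ_{n,0} for all n ≥ 0; in particular this sum vanishes for every n ≥ 1. Equivalently, the infinite lower triangular matrices with (n,j) entries R_{n−j}(x|q)/(q;q)_{n−j} and R̂_{n−j}(x|q)/(q;q)_{n−j} respectively are mutually inverse. -/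

import Mathlib

open Finset

/-- The finite q-Pochhammer symbol `(a;q)_n = ∏_{i=0}^{n-1} (1 - a q^i)`. -/
noncomputable def qPoch (a q : ℂ) (n : ℕ) : ℂ := ∏ i ∈ Finset.range n, (1 - a * q ^ i)

/-- The Gaussian binomial coefficient `[n,j]_q = (q;q)_n/((q;q)_{n-j}(q;q)_j)`. -/
noncomputable def gaussBinom (q : ℂ) (n j : ℕ) : ℂ :=
  qPoch q q n / (qPoch q q (n - j) * qPoch q q j)

/-- The Rogers–Szegő polynomial `R_n(x|q) = ∑_{j=0}^n [n,j]_q x^j`. -/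
noncomputable def rogersSzego (q x : ℂ) (n : ℕ) : ℂ :=
  ∑ j ∈ Finset.range (n + 1), gaussBinom q n j * x ^ j

/-- `R̂_n(x|q) = (-1)^n ∑_{s=0}^n [n,s]_q x^s q^{s(s-1)/2 + (n-s)(n-s-1)/2}`. -/
noncomputable def rogersSzegoHat (q x : ℂ) (n : ℕ) : ℂ :=
  (-1 : ℂ) ^ n * ∑ s ∈ Finset.range (n + 1),
    gaussBinom q n s * x ^ s * q ^ (s * (s - 1) / 2 + (n - s) * (n - s - 1) / 2)

lemma qPoch_zero (a q : ℂ) : qPoch a q 0 = 1 := by simp [qPoch]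

lemma qPoch_succ (a q : ℂ) (n : ℕ) : qPoch a q (n + 1) = qPoch a q n * (1 - a * q ^ n) :=
  Finset.prod_range_succ _ _

lemma qPoch_ne_zero {q : ℂ} (hq : ‖q‖ < 1) (k : ℕ) : qPoch q q k ≠ 0 := by
  unfold qPoch
  rw [Finset.prod_ne_zero_iff]
  intro i _ h
  have h1 : q * q ^ i = 1 := by linear_combination -h
  have h2 : ‖q * q ^ i‖ = 1 := by rw [h1]; simp
  have h3 : ‖q * q ^ i‖ ≤ ‖q‖ * 1 := by
    rw [norm_mul, norm_pow]
    gcongr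
    exact pow_le_one₀ (norm_nonneg _) hq.le
  rw [mul_one] at h3
  linarith

lemma tri_succ (k : ℕ) : (k + 1) * ((k + 1) - 1) / 2 = k * (k - 1) / 2 + k := by
  rcases k with _ | m
  · simp
  · have h : (m + 1 + 1) * (m + 1 + 1 - 1) = (m + 1) * (m + 1 - 1) + 2 * (m + 1) := by
      simp only [Nat.add_sub_cancel]
      ring
    rw [h, Nat.add_mul_div_left _ _ (by norm_num : (0:ℕ) < 2)]

lemma gaussBinom_self {q : ℂ} (hq : ‖q‖ < 1) (n : ℕ) : gaussBinom q n n = 1 := by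
  unfold gaussBinom
  rw [Nat.sub_self, qPoch_zero, one_mul, div_self (qPoch_ne_zero hq n)]

lemma gaussBinom_zero {q : ℂ} (hq : ‖q‖ < 1) (n : ℕ) : gaussBinom q n 0 = 1 := by
  unfold gaussBinom
  rw [Nat.sub_zero, qPoch_zero, mul_one, div_self (qPoch_ne_zero hq n)]

lemma pascal {q : ℂ} (hq : ‖q‖ < 1) (k m : ℕ) :
    gaussBinom q (k + 1 + m + 1) (k + 1) =
      gaussBinom q (k + 1 + m) (k + 1) + q ^ (m + 1) * gaussBinom q (k + 1 + m) k := by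
  have hP := qPoch_ne_zero hq
  unfold gaussBinom
  have e1 : k + 1 + m + 1 - (k + 1) = m + 1 := by omega
  have e2 : k + 1 + m - (k + 1) = m := by omega
  have e3 : k + 1 + m - k = m + 1 := by omega
  rw [e1, e2, e3, qPoch_succ q q (k + 1 + m), qPoch_succ q q m, qPoch_succ q q k]
  have hm : (1 : ℂ) - q * q ^ m ≠ 0 := by
    have := qPoch_ne_zero hq (m + 1); rw [qPoch_succ] at this
    exact right_ne_zero_of_mul this
  have hk : (1 : ℂ) - q * q ^ k ≠ 0 := by
    have := qPoch_ne_zero hq (k + 1); rw [qPoch_succ] at this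
    exact right_ne_zero_of_mul this
  have hN : (1 : ℂ) - q * q ^ (k + 1 + m) ≠ 0 := by
    have := qPoch_ne_zero hq (k + 1 + m + 1); rw [qPoch_succ] at this
    exact right_ne_zero_of_mul this
  have h1 := hP k
  have h2 := hP m
  have h3 := hP (k + 1 + m)
  field_simp
  ring

lemma T_eq {q : ℂ} (hq : ‖q‖ < 1) (n : ℕ) :
    (∑ k ∈ Finset.range (n + 1),
        gaussBinom q n k * ((-1 : ℂ) ^ k * q ^ (k * (k - 1) / 2))) =
      if n = 0 then 1 else 0 := by
  set c : ℕ → ℂ := fun k => (-1 : ℂ) ^ k * q ^ (k * (k - 1) / 2) with hc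
  induction n with
  | zero => simp [gaussBinom_zero hq, hc]
  | succ n ih =>
    have h1 : ∑ k ∈ Finset.range (n + 1 + 1), gaussBinom q (n + 1) k * c k
        = (∑ k ∈ Finset.range n, gaussBinom q (n + 1) (k + 1) * c (k + 1))
          + gaussBinom q (n + 1) (n + 1) * c (n + 1) + gaussBinom q (n + 1) 0 * c 0 := by
      rw [Finset.sum_range_succ' (fun k => gaussBinom q (n + 1) k * c k) (n + 1),
        Finset.sum_range_succ]
    have h2 : ∀ k ∈ Finset.range n, gaussBinom q (n + 1) (k + 1) * c (k + 1)
        = gaussBinom q n (k + 1) * c (k + 1) + (-(q ^ n)) * (gaussBinom q n k * c k) := by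
      intro k hk
      rw [Finset.mem_range] at hk
      obtain ⟨m, rfl⟩ : ∃ m, n = k + 1 + m := ⟨n - k - 1, by omega⟩
      rw [pascal hq k m]
      simp only [hc]
      rw [tri_succ, pow_add q (k * (k - 1) / 2) k]
      have hqq : q ^ (k + 1 + m) = q ^ (m + 1) * q ^ k := by rw [← pow_add]; congr 1; omega
      rw [hqq, pow_succ]
      ring
    have h4 : ∑ k ∈ Finset.range (n + 1), gaussBinom q n k * c k
        = (∑ k ∈ Finset.range n, gaussBinom q n (k + 1) * c (k + 1)) + gaussBinom q n 0 * c 0 :=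
      Finset.sum_range_succ' _ n
    have h5 : ∑ k ∈ Finset.range (n + 1), gaussBinom q n k * c k
        = (∑ k ∈ Finset.range n, gaussBinom q n k * c k) + gaussBinom q n n * c n :=
      Finset.sum_range_succ _ _
    have h6 : c (n + 1) = -(q ^ n) * c n := by
      simp only [hc]
      rw [tri_succ, pow_add, pow_succ]
      ring
    have hc0 : c 0 = 1 := by simp [hc]
    have ih' : ∑ k ∈ Finset.range (n + 1), gaussBinom q n k * c k = if n = 0 then 1 else 0 := ih
    simp only [gaussBinom_self hq, gaussBinom_zero hq, hc0, one_mul, mul_one] at h1 h4 h5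
    rw [h1, Finset.sum_congr rfl h2, Finset.sum_add_distrib, ← Finset.mul_sum, h6]
    have hT : (∑ k ∈ Finset.range n, gaussBinom q n (k + 1) * c (k + 1))
        = (if n = 0 then 1 else 0) - 1 := by
      rw [← ih', h4]; ring
    have hB : (∑ k ∈ Finset.range n, gaussBinom q n k * c k)
        = (if n = 0 then 1 else 0) - c n := by
      rw [← ih', h5]; ring
    rw [hT, hB]
    rcases Nat.eq_zero_or_pos n with hn | hn
    · subst hn; simp [hc]
    · rw [if_neg hn.ne', if_neg (by omega : ¬ n + 1 = 0)]
      ring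

lemma div_helper' (a b e c : ℂ) :
    a / (e * b) * c = a * (c / b * (1 / e)) := by
  rw [div_mul_eq_mul_div, mul_one_div, div_div, mul_comm b e, mul_div_assoc]

lemma BD_coeff {q : ℂ} (hq : ‖q‖ < 1) (n : ℕ) :
    ∑ k ∈ Finset.range (n + 1),
      ((-1 : ℂ) ^ k * q ^ (k * (k - 1) / 2) / qPoch q q k) * (1 / qPoch q q (n - k)) =
      if n = 0 then 1 else 0 := by
  have hP := qPoch_ne_zero hq
  have h : (∑ k ∈ Finset.range (n + 1),
      gaussBinom q n k * ((-1 : ℂ) ^ k * q ^ (k * (k - 1) / 2)))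
      = qPoch q q n * ∑ k ∈ Finset.range (n + 1),
        ((-1 : ℂ) ^ k * q ^ (k * (k - 1) / 2) / qPoch q q k) * (1 / qPoch q q (n - k)) := by
    rw [Finset.mul_sum]
    apply Finset.sum_congr rfl
    intro k _
    exact div_helper' _ _ _ _
  rw [T_eq hq n] at h
  rcases Nat.eq_zero_or_pos n with hn | hn
  · subst hn; simp [qPoch_zero]
  · rw [if_neg hn.ne'] at h ⊢
    exact ((mul_eq_zero.mp h.symm).resolve_left (hP n))

lemma coeff_mk_mul (f g : ℕ → ℂ) (n : ℕ) :
    PowerSeries.coeff n (PowerSeries.mk f * PowerSeries.mk g) =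
      ∑ k ∈ Finset.range (n + 1), f k * g (n - k) := by
  rw [PowerSeries.coeff_mul, Finset.Nat.sum_antidiagonal_eq_sum_range_succ_mk]
  simp [PowerSeries.coeff_mk]

lemma hBD {q : ℂ} (hq : ‖q‖ < 1) :
    (PowerSeries.mk fun k => (-1 : ℂ) ^ k * q ^ (k * (k - 1) / 2) / qPoch q q k) *
      (PowerSeries.mk fun k => 1 / qPoch q q k) = 1 := by
  ext n
  rw [coeff_mk_mul, PowerSeries.coeff_one, BD_coeff hq n]

lemma hAC {q x : ℂ} (hq : ‖q‖ < 1) :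
    (PowerSeries.mk fun k => (-1 : ℂ) ^ k * x ^ k * q ^ (k * (k - 1) / 2) / qPoch q q k) *
      (PowerSeries.mk fun k => x ^ k / qPoch q q k) = 1 := by
  ext n
  rw [coeff_mk_mul, PowerSeries.coeff_one]
  have h : ∑ k ∈ Finset.range (n + 1),
      ((-1 : ℂ) ^ k * x ^ k * q ^ (k * (k - 1) / 2) / qPoch q q k) * (x ^ (n - k) / qPoch q q (n - k))
      = x ^ n * ∑ k ∈ Finset.range (n + 1),
          ((-1 : ℂ) ^ k * q ^ (k * (k - 1) / 2) / qPoch q q k) * (1 / qPoch q q (n - k)) := by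
    rw [Finset.mul_sum]
    apply Finset.sum_congr rfl
    intro k hk
    rw [Finset.mem_range] at hk
    obtain ⟨m, rfl⟩ : ∃ m, n = k + m := ⟨n - k, by omega⟩
    simp only [Nat.add_sub_cancel_left]
    rw [pow_add]
    ring
  rw [h, BD_coeff hq n]
  split <;> simp_all


lemma hR_eq {q : ℂ} (x : ℂ) (hq : ‖q‖ < 1) :
    (PowerSeries.mk fun k => rogersSzego q x k / qPoch q q k) =
      (PowerSeries.mk fun k => x ^ k / qPoch q q k) *
        (PowerSeries.mk fun k => 1 / qPoch q q k) := by
  ext n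
  rw [coeff_mk_mul, PowerSeries.coeff_mk]
  unfold rogersSzego
  rw [Finset.sum_div]
  apply Finset.sum_congr rfl
  intro j _
  rw [div_eq_iff (qPoch_ne_zero hq n)]
  simp only [gaussBinom, div_eq_mul_inv, mul_inv, one_mul]
  ring

lemma hRh_eq {q : ℂ} (x : ℂ) (hq : ‖q‖ < 1) :
    (PowerSeries.mk fun k => rogersSzegoHat q x k / qPoch q q k) =
      (PowerSeries.mk fun k => (-1 : ℂ) ^ k * x ^ k * q ^ (k * (k - 1) / 2) / qPoch q q k) *
        (PowerSeries.mk fun k => (-1 : ℂ) ^ k * q ^ (k * (k - 1) / 2) / qPoch q q k) := by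
  ext n
  rw [coeff_mk_mul, PowerSeries.coeff_mk]
  unfold rogersSzegoHat
  rw [Finset.mul_sum, Finset.sum_div]
  apply Finset.sum_congr rfl
  intro s hs
  rw [Finset.mem_range] at hs
  obtain ⟨m, rfl⟩ : ∃ m, n = s + m := ⟨n - s, by omega⟩
  simp only [gaussBinom, Nat.add_sub_cancel_left]
  rw [div_eq_iff (qPoch_ne_zero hq (s + m)), pow_add ((-1) : ℂ), pow_add q]
  simp only [div_eq_mul_inv, mul_inv]
  ring

lemma key {q : ℂ} (x : ℂ) (hq : ‖q‖ < 1) (n : ℕ) :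
    ∑ k ∈ Finset.range (n + 1),
      (rogersSzego q x k / qPoch q q k) * (rogersSzegoHat q x (n - k) / qPoch q q (n - k)) =
      if n = 0 then 1 else 0 := by
  have hprod : (PowerSeries.mk fun k => rogersSzego q x k / qPoch q q k) *
      (PowerSeries.mk fun k => rogersSzegoHat q x k / qPoch q q k) = 1 := by
    rw [hR_eq x hq, hRh_eq x hq,
      show ∀ A B C D : PowerSeries ℂ, (C * D) * (A * B) = (A * C) * (B * D) from
        fun _ _ _ _ => by ring,
      hAC hq, hBD hq, one_mul]
  have h := congrArg (PowerSeries.coeff n) hprod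
  rwa [coeff_mk_mul, PowerSeries.coeff_one] at h

/-- `∑_{j=0}^n [n,j]_q R_j(x|q) R̂_{n-j}(x|q) = δ_{n,0}`; equivalently, the lower
triangular matrices with entries `R_{n-j}(x|q)/(q;q)_{n-j}` and `R̂_{n-j}(x|q)/(q;q)_{n-j}`
are mutually inverse. -/
theorem rogersSzego_inverse (q x : ℂ) (hq : ‖q‖ < 1) :
    (∀ n : ℕ,
      ∑ j ∈ Finset.range (n + 1),
        gaussBinom q n j * rogersSzego q x j * rogersSzegoHat q x (n - j) =
        if n = 0 then 1 else 0) ∧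
    (∀ n j : ℕ, j ≤ n →
      ∑ k ∈ Finset.Icc j n,
        (rogersSzego q x (n - k) / qPoch q q (n - k)) *
          (rogersSzegoHat q x (k - j) / qPoch q q (k - j)) =
        if n = j then 1 else 0) := by
  constructor
  · intro n
    have h : ∑ j ∈ Finset.range (n + 1),
        gaussBinom q n j * rogersSzego q x j * rogersSzegoHat q x (n - j)
        = qPoch q q n * ∑ j ∈ Finset.range (n + 1),
            (rogersSzego q x j / qPoch q q j) *
              (rogersSzegoHat q x (n - j) / qPoch q q (n - j)) := by
      rw [Finset.mul_sum]
      apply Finset.sum_congr rfl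
      intro j _
      simp only [gaussBinom, div_eq_mul_inv, mul_inv]
      ring
    rw [h, key x hq n]
    rcases n with _ | m
    · simp [qPoch_zero]
    · simp
  · intro n j hj
    rw [← Finset.Ico_add_one_right_eq_Icc, Finset.sum_Ico_eq_sum_range,
      show n + 1 - j = (n - j) + 1 from by omega]
    have h : ∀ i ∈ Finset.range ((n - j) + 1),
        (rogersSzego q x (n - (j + i)) / qPoch q q (n - (j + i))) *
          (rogersSzegoHat q x ((j + i) - j) / qPoch q q ((j + i) - j))
        = (rogersSzego q x ((n - j) - i) / qPoch q q ((n - j) - i)) *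
            (rogersSzegoHat q x i / qPoch q q i) := by
      intro i _
      rw [show j + i - j = i from by omega, show n - (j + i) = (n - j) - i from by omega]
    rw [Finset.sum_congr rfl h]
    have h2 := Finset.sum_range_reflect
      (fun i => (rogersSzego q x i / qPoch q q i) *
        (rogersSzegoHat q x ((n - j) - i) / qPoch q q ((n - j) - i))) ((n - j) + 1)
    simp only [Nat.add_sub_cancel] at h2
    have h3 : ∀ i ∈ Finset.range ((n - j) + 1),
        (rogersSzego q x ((n - j) - i) / qPoch q q ((n - j) - i)) *
          (rogersSzegoHat q x ((n - j) - ((n - j) - i)) / qPoch q q ((n - j) - ((n - j) - i)))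
        = (rogersSzego q x ((n - j) - i) / qPoch q q ((n - j) - i)) *
            (rogersSzegoHat q x i / qPoch q q i) := by
      intro i hi
      rw [Finset.mem_range] at hi
      rw [show (n - j) - ((n - j) - i) = i from by omega]
    rw [Finset.sum_congr rfl h3] at h2
    rw [h2, key x hq (n - j)]
    by_cases hn : n = j
    · simp [hn]
    · rw [if_neg (by omega : ¬ n - j = 0), if_neg hn]
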